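/- arXiv:2203.07232 — 5 statements merged into one kernel-verified Lean document; each statement's English description precedes it below -/
import Mathlib

section
/- Let A be a 2×2 Hermitian matrix with diagonal entries d₁ and a, and off-diagonal entries a₁ and its conjugate. If ε > 0 and a ≥ |a₁|²/ε + d₁, then the eigenvalues λ₁ = (a + d₁ - √((a-d₁)² + 4|a₁|²))/2 and λ₂ = (a + d₁ + √((a-d₁)² + 4|a₁|²))/2 satisfy 0 ≤ d₁ - λ₁ = λ₂ - a < ε. -/
/-- 2×2 Hermitian matrix [[d₁, a₁],[conj a₁, a]]: if ε > 0 and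
a ≥ |a₁|²/ε + d₁ then the explicit eigenvalues λ₁, λ₂ satisfy
0 ≤ d₁ - λ₁ = λ₂ - a < ε. -/
theorem stmt0 (d₁ a : ℝ) (a₁ : ℂ) (ε : ℝ) (hε : 0 < ε)
    (ha : a ≥ ‖a₁‖ ^ 2 / ε + d₁) :
    0 ≤ d₁ - (a + d₁ - Real.sqrt ((a - d₁) ^ 2 + 4 * ‖a₁‖ ^ 2)) / 2 ∧
    d₁ - (a + d₁ - Real.sqrt ((a - d₁) ^ 2 + 4 * ‖a₁‖ ^ 2)) / 2 =
      (a + d₁ + Real.sqrt ((a - d₁) ^ 2 + 4 * ‖a₁‖ ^ 2)) / 2 - a ∧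
    (a + d₁ + Real.sqrt ((a - d₁) ^ 2 + 4 * ‖a₁‖ ^ 2)) / 2 - a < ε := by
  set b := ‖a₁‖ ^ 2 with hb
  have hb0 : 0 ≤ b := sq_nonneg _
  have had : a - d₁ ≥ b / ε := by linarith
  have had0 : 0 ≤ a - d₁ := le_trans (div_nonneg hb0 hε.le) had
  have hbε : b ≤ ε * (a - d₁) := by
    have := (div_le_iff₀ hε).mp had
    linarith
  set s := Real.sqrt ((a - d₁) ^ 2 + 4 * b) with hs
  have hs1 : a - d₁ ≤ s := by
    have : a - d₁ = Real.sqrt ((a - d₁) ^ 2) := (Real.sqrt_sq had0).symm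
    rw [this]
    exact Real.sqrt_le_sqrt (by nlinarith)
  have hs2 : s < a - d₁ + 2 * ε := by
    have hpos : 0 < a - d₁ + 2 * ε := by linarith
    have : (a - d₁) ^ 2 + 4 * b < (a - d₁ + 2 * ε) ^ 2 := by nlinarith
    calc s < Real.sqrt ((a - d₁ + 2 * ε) ^ 2) := by
            apply Real.sqrt_lt_sqrt (by nlinarith) this
      _ = a - d₁ + 2 * ε := Real.sqrt_sq hpos.le
  refine ⟨by linarith, by ring, by linarith⟩
end

section
/- (Generalized Newton–Maclaurin inequality) Let μ₁,…,μₙ > 0 with n ≥ 2. Then Σᵢ 1/μᵢ ≥ n^{(n-2)/(n-1)} · ((Σᵢ μᵢ)/(μ₁⋯μₙ))^{1/(n-1)}. -/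
open Finset

lemma key2 (n : ℕ) (a c : ℝ) (ha : 0 ≤ a) (hc : 0 ≤ c) :
    ((n : ℝ) + 1) * a ^ n * c ≤ (n : ℝ) * a ^ (n + 1) + c ^ (n + 1) := by
  induction n with
  | zero => simp
  | succ m ih =>
    have e : ((m : ℝ) + 1) * a ^ (m + 2) + c ^ (m + 2) - ((m : ℝ) + 2) * a ^ (m + 1) * c
        = c * (((m : ℝ) * a ^ (m + 1) + c ^ (m + 1)) - ((m : ℝ) + 1) * a ^ m * c)
          + ((m : ℝ) + 1) * a ^ m * (c - a) ^ 2 := by ring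
    have h1 : 0 ≤ c * (((m : ℝ) * a ^ (m + 1) + c ^ (m + 1)) - ((m : ℝ) + 1) * a ^ m * c) :=
      mul_nonneg hc (by linarith)
    have h2 : 0 ≤ ((m : ℝ) + 1) * a ^ m * (c - a) ^ 2 := by positivity
    push_cast
    nlinarith [e]

lemma keyK (n : ℕ) (a b : ℝ) (ha : 0 ≤ a) (hb : 0 ≤ b) :
    a ^ n * b ≤ (((n : ℝ) * a + b) / ((n : ℝ) + 1)) ^ (n + 1) := by
  have hn1 : (0:ℝ) < (n : ℝ) + 1 := by positivity
  set c : ℝ := ((n : ℝ) * a + b) / ((n : ℝ) + 1) with hc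
  have hc0 : 0 ≤ c := by positivity
  have h := key2 n a c ha hc0
  have e : ((n : ℝ) + 1) * a ^ n * c = (n : ℝ) * a ^ (n + 1) + a ^ n * b := by
    rw [hc]; field_simp; ring
  linarith

lemma amgm {ι : Type*} [DecidableEq ι] (x : ι → ℝ) {s : Finset ι} (hs : s.Nonempty) :
    (∀ i ∈ s, 0 ≤ x i) → ∏ i ∈ s, x i ≤ ((∑ i ∈ s, x i) / (s.card : ℝ)) ^ s.card := by
  induction hs using Finset.Nonempty.cons_induction with
  | singleton a => intro hx; simp
  | cons a s ha hs ih =>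
    intro hx
    have hm : (0:ℝ) < (s.card : ℝ) := by
      exact_mod_cast Nat.pos_of_ne_zero (Finset.card_ne_zero_of_mem hs.choose_spec)
    have hxs : ∀ i ∈ s, 0 ≤ x i := fun i hi => hx i (Finset.mem_cons_of_mem hi)
    have hxa : 0 ≤ x a := hx a (Finset.mem_cons_self a s)
    have hS : 0 ≤ ∑ i ∈ s, x i := Finset.sum_nonneg hxs
    have ih' := ih hxs
    rw [Finset.prod_cons, Finset.sum_cons, Finset.card_cons]
    have h1 : x a * ∏ i ∈ s, x i ≤ ((∑ i ∈ s, x i) / (s.card : ℝ)) ^ s.card * x a := by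
      rw [mul_comm]
      exact mul_le_mul_of_nonneg_right ih' hxa
    have h2 := keyK s.card ((∑ i ∈ s, x i) / (s.card : ℝ)) (x a) (by positivity) hxa
    have e : (s.card : ℝ) * ((∑ i ∈ s, x i) / (s.card : ℝ)) + x a = x a + ∑ i ∈ s, x i := by
      field_simp; ring
    rw [e] at h2
    calc x a * ∏ i ∈ s, x i ≤ ((∑ i ∈ s, x i) / (s.card : ℝ)) ^ s.card * x a := h1
      _ ≤ ((x a + ∑ i ∈ s, x i) / ((s.card : ℝ) + 1)) ^ (s.card + 1) := h2
      _ = ((x a + ∑ i ∈ s, x i) / ((s.card + 1 : ℕ) : ℝ)) ^ (s.card + 1) := by push_cast; ring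

lemma step (k : ℕ) (u t : ℝ) (hu : 0 ≤ u) (ht : 0 ≤ t) :
    (u / ((k:ℝ)+1)) ^ (k+1) + ((k:ℝ)+1) * t * (u / ((k:ℝ)+1)) ^ k
      ≤ ((k:ℝ)+2) * ((u+t) / ((k:ℝ)+2)) ^ (k+1) := by
  have h1 : (0:ℝ) < (k:ℝ)+1 := by positivity
  have h2 : (0:ℝ) < (k:ℝ)+2 := by positivity
  set a : ℝ := ((k:ℝ)+2) * u / ((k:ℝ)+1)^2 with hadef
  set b : ℝ := (u + ((k:ℝ)+1)^2 * t) / ((k:ℝ)+1)^2 with hbdef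
  have ha : 0 ≤ a := by positivity
  have hb : 0 ≤ b := by positivity
  have hK := keyK k a b ha hb
  have hab : (k:ℝ) * a + b = u + t := by rw [hadef, hbdef]; field_simp; ring
  rw [hab] at hK
  have hc : (0:ℝ) ≤ ((k:ℝ)+1)^(k+1) / ((k:ℝ)+2)^k := by positivity
  have hK2 := mul_le_mul_of_nonneg_left hK hc
  have E1 : (u / ((k:ℝ)+1)) ^ (k+1) + ((k:ℝ)+1) * t * (u / ((k:ℝ)+1)) ^ k
      = ((k:ℝ)+1)^(k+1) / ((k:ℝ)+2)^k * (a ^ k * b) := by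
    have hak : a ^ k = (((k:ℝ)+2)^k * u^k) / ((k:ℝ)+1)^(2*k) := by
      rw [hadef, div_pow, mul_pow, ← pow_mul]
    rw [hak, hbdef]
    rw [div_pow, div_pow]
    field_simp
    ring
  have E2 : ((k:ℝ)+2) * ((u+t) / ((k:ℝ)+2)) ^ (k+1)
      = ((k:ℝ)+1)^(k+1) / ((k:ℝ)+2)^k * (((u+t) / ((k:ℝ)+1)) ^ (k+1)) := by
    rw [div_pow, div_pow]
    field_simp
    ring
  rw [E1, E2]
  exact hK2

lemma Lkey {ι : Type*} [DecidableEq ι] (x : ι → ℝ) {s : Finset ι} (hs : s.Nonempty) :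
    (∀ i ∈ s, 0 ≤ x i) →
      ∑ i ∈ s, ∏ j ∈ s.erase i, x j
        ≤ (s.card : ℝ) * ((∑ i ∈ s, x i) / (s.card : ℝ)) ^ (s.card - 1) := by
  induction hs using Finset.Nonempty.cons_induction with
  | singleton a => intro hx; simp
  | cons a s ha hs ih =>
    intro hx
    obtain ⟨k, hk⟩ : ∃ k, s.card = k + 1 := by
      have := Finset.card_pos.mpr hs; exact ⟨s.card - 1, by omega⟩
    have hxs : ∀ i ∈ s, 0 ≤ x i := fun i hi => hx i (Finset.mem_cons_of_mem hi)
    have hxa : 0 ≤ x a := hx a (Finset.mem_cons_self a s)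
    have hS : 0 ≤ ∑ i ∈ s, x i := Finset.sum_nonneg hxs
    have hsplit : ∑ i ∈ Finset.cons a s ha, ∏ j ∈ (Finset.cons a s ha).erase i, x j
        = (∏ j ∈ s, x j) + x a * ∑ i ∈ s, ∏ j ∈ s.erase i, x j := by
      rw [Finset.sum_cons, Finset.erase_cons ha, Finset.mul_sum]
      congr 1
      refine Finset.sum_congr rfl fun i hi => ?_
      rw [Finset.erase_cons_of_ne ha (fun h => ha (h ▸ hi)), Finset.prod_cons]
    have h1 : ∏ j ∈ s, x j ≤ ((∑ i ∈ s, x i) / (s.card : ℝ)) ^ s.card := amgm x hs hxs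
    have h2 := mul_le_mul_of_nonneg_left (ih hxs) hxa
    have h3 := step k (∑ i ∈ s, x i) (x a) hS hxa
    rw [hsplit, Finset.sum_cons, Finset.card_cons, hk]
    have hc1 : ((k + 1 + 1 : ℕ) : ℝ) = (k : ℝ) + 2 := by push_cast; ring
    have hc2 : ((k + 1 : ℕ) : ℝ) = (k : ℝ) + 1 := by push_cast; ring
    rw [hk, hc2] at h1 h2
    simp only [Nat.add_sub_cancel] at h2 ⊢
    rw [hc1]
    have hadd : x a + ∑ i ∈ s, x i = (∑ i ∈ s, x i) + x a := by ring
    rw [hadd]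
    calc (∏ j ∈ s, x j) + x a * ∑ i ∈ s, ∏ j ∈ s.erase i, x j
        ≤ ((∑ i ∈ s, x i) / ((k:ℝ) + 1)) ^ (k + 1)
            + x a * (((k:ℝ) + 1) * ((∑ i ∈ s, x i) / ((k:ℝ) + 1)) ^ k) := by linarith
      _ ≤ ((k:ℝ) + 2) * (((∑ i ∈ s, x i) + x a) / ((k:ℝ) + 2)) ^ (k + 1) := by
            have : ((k:ℝ) + 1) * x a * ((∑ i ∈ s, x i) / ((k:ℝ) + 1)) ^ k
                = x a * (((k:ℝ) + 1) * ((∑ i ∈ s, x i) / ((k:ℝ) + 1)) ^ k) := by ring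
            linarith [h3, this.symm ▸ h3]

/-- Generalized Newton–Maclaurin inequality:
Σᵢ 1/μᵢ ≥ n^{(n-2)/(n-1)} ((Σᵢ μᵢ)/(μ₁⋯μₙ))^{1/(n-1)}. -/
theorem stmt9 (n : ℕ) (hn : 2 ≤ n) (μ : Fin n → ℝ) (hμ : ∀ i, 0 < μ i) :
    ∑ i : Fin n, (μ i)⁻¹
      ≥ (n : ℝ) ^ (((n : ℝ) - 2) / ((n : ℝ) - 1)) *
        ((∑ i : Fin n, μ i) / ∏ i : Fin n, μ i) ^ ((1 : ℝ) / ((n : ℝ) - 1)) := by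

  have hn' : (2:ℝ) ≤ (n:ℝ) := by exact_mod_cast hn
  have hnpos : (0:ℝ) < (n:ℝ) := by linarith
  have hn1 : (0:ℝ) < (n:ℝ) - 1 := by linarith
  have hne : (Finset.univ : Finset (Fin n)).Nonempty := ⟨⟨0, by omega⟩, Finset.mem_univ _⟩
  have hP : 0 < ∏ i : Fin n, μ i := Finset.prod_pos fun i _ => hμ i
  have hS : 0 < ∑ i : Fin n, μ i := Finset.sum_pos (fun i _ => hμ i) hne
  have hB : 0 < ∑ i : Fin n, (μ i)⁻¹ :=
    Finset.sum_pos (fun i _ => inv_pos.mpr (hμ i)) hne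
  set B : ℝ := ∑ i : Fin n, (μ i)⁻¹ with hBdef
  set A : ℝ := (∑ i : Fin n, μ i) / ∏ i : Fin n, μ i with hAdef
  have hA : 0 < A := div_pos hS hP
  have h0 := Lkey (fun i => (μ i)⁻¹) hne (fun i _ => (inv_pos.mpr (hμ i)).le)
  simp only [Finset.card_univ, Fintype.card_fin] at h0
  have hid : ∑ i : Fin n, ∏ j ∈ Finset.univ.erase i, (μ j)⁻¹ = A := by
    have hterm : ∀ i : Fin n, ∏ j ∈ Finset.univ.erase i, (μ j)⁻¹
        = (∏ j : Fin n, μ j)⁻¹ * μ i := by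
      intro i
      have h := Finset.prod_erase_mul Finset.univ μ (Finset.mem_univ i)
      have hμi : μ i ≠ 0 := (hμ i).ne'
      have he : ∏ j ∈ Finset.univ.erase i, μ j = (∏ j : Fin n, μ j) / μ i := by
        rw [← h]; field_simp
      rw [Finset.prod_inv_distrib, he, inv_div, div_eq_mul_inv, mul_comm]
    rw [Finset.sum_congr rfl fun i _ => hterm i, ← Finset.mul_sum, hAdef]
    rw [inv_mul_eq_div]
  rw [hid] at h0
  -- rewrite RHS of h0 using rpow
  have c1 : (B:ℝ)^(n-1) = B ^ ((n:ℝ)-1) := by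
    rw [← Real.rpow_natCast B (n-1), Nat.cast_sub (by omega : 1 ≤ n), Nat.cast_one]
  have c2 : ((n:ℝ))^(n-1) = (n:ℝ) ^ ((n:ℝ)-1) := by
    rw [← Real.rpow_natCast (n:ℝ) (n-1), Nat.cast_sub (by omega : 1 ≤ n), Nat.cast_one]
  have hpow : (n:ℝ) ^ ((n:ℝ)-1) = (n:ℝ) ^ ((n:ℝ)-2) * (n:ℝ) := by
    rw [show (n:ℝ)-1 = ((n:ℝ)-2)+1 by ring, Real.rpow_add_one hnpos.ne']
  have hc : (0:ℝ) < (n:ℝ) ^ (((n:ℝ)-2)/((n:ℝ)-1)) := Real.rpow_pos_of_pos hnpos _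
  have hc2pos : (0:ℝ) < (n:ℝ) ^ ((n:ℝ)-2) := Real.rpow_pos_of_pos hnpos _
  have key : (n:ℝ) * (B/(n:ℝ))^(n-1) = B ^ ((n:ℝ)-1) / (n:ℝ) ^ ((n:ℝ)-2) := by
    rw [div_pow, c1, c2, hpow]
    field_simp
  rw [key] at h0
  -- h0 : A ≤ B ^ (n-1) / n ^ (n-2)   (rpow)
  have he : (0:ℝ) < 1/((n:ℝ)-1) := by positivity
  have h4 := Real.rpow_le_rpow hA.le h0 he.le
  rw [Real.div_rpow (Real.rpow_nonneg hB.le _) (Real.rpow_nonneg hnpos.le _),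
    ← Real.rpow_mul hB.le, ← Real.rpow_mul hnpos.le,
    mul_one_div_cancel hn1.ne', Real.rpow_one, mul_one_div] at h4
  rw [ge_iff_le, ← le_div_iff₀' hc]
  exact h4
end

section
/- Let A be an n×n Hermitian arrowhead matrix (n ≥ 3) with diagonal d₁,…,d_{n-1}, a, last-column entries a₁,…,a_{n-1}, and eigenvalues λ₁ ≤ ⋯ ≤ λₙ. Fix ε > 0 and suppose a ≥ (1/ε) Σᵢ|aᵢ|² + Σᵢ [dᵢ + (n-2)|dᵢ|] + (n-2)ε. Then for each α ∈ {1,…,n-1} there exists an index i_α ∈ {1,…,n-1} with |λ_α − d_{i_α}| < ε, and moreover 0 ≤ λₙ − a < (n-1)ε + |Σ_{α=1}^{n-1}(d_α − d_{i_α})|. -/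
open Finset Matrix

private theorem arrow_diag_le (n : Type*) [Fintype n] [DecidableEq n]
    (A : Matrix n n ℂ) (hA : A.IsHermitian)
    (i : n) (c : ℝ) (hc : ∀ j, hA.eigenvalues j ≤ c) : (A i i).re ≤ c := by
  have h1 : A i i = ∑ j, (hA.eigenvalues j : ℂ) *
      Complex.normSq ((hA.eigenvectorUnitary : Matrix n n ℂ) i j) := by
    conv_lhs => rw [hA.spectral_theorem, Unitary.conjStarAlgAut_apply]
    simp only [Matrix.mul_apply, Matrix.diagonal_apply, Function.comp_apply, mul_ite, mul_zero,
      Finset.sum_ite_eq', Finset.mem_univ, if_true, Matrix.star_apply, Complex.star_def]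
    congr 1; ext x
    rw [← Complex.mul_conj, mul_right_comm, mul_comm]; norm_cast
  have h2 : ∑ j, (Complex.normSq ((hA.eigenvectorUnitary : Matrix n n ℂ) i j)) = 1 := by
    have h := (Matrix.mem_unitaryGroup_iff).mp (hA.eigenvectorUnitary).2
    have h' := congrFun (congrFun h i) i
    simp only [Matrix.mul_apply, Matrix.one_apply_eq, Matrix.star_apply, Complex.star_def] at h'
    have h'' : ∑ j, (Complex.normSq ((hA.eigenvectorUnitary : Matrix n n ℂ) i j) : ℂ) = 1 := by
      rw [← h']; congr 1; ext j; rw [Complex.mul_conj]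
    exact_mod_cast h''
  have h3 : (A i i).re = ∑ j, hA.eigenvalues j *
      Complex.normSq ((hA.eigenvectorUnitary : Matrix n n ℂ) i j) := by
    rw [h1, Complex.re_sum]; congr 1; ext j; simp
  rw [h3]
  calc ∑ j, hA.eigenvalues j * Complex.normSq ((hA.eigenvectorUnitary : Matrix n n ℂ) i j)
      ≤ ∑ j, c * Complex.normSq ((hA.eigenvectorUnitary : Matrix n n ℂ) i j) := by
        apply Finset.sum_le_sum; intro j _
        exact mul_le_mul_of_nonneg_right (hc j) (Complex.normSq_nonneg _)
    _ = c := by rw [← Finset.mul_sum, h2, mul_one]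

private theorem arrow_trace (n : Type*) [Fintype n] [DecidableEq n]
    (A : Matrix n n ℂ) (hA : A.IsHermitian) :
    A.trace = ∑ i, (hA.eigenvalues i : ℂ) := by
  conv_lhs => rw [hA.spectral_theorem, Unitary.conjStarAlgAut_apply]
  rw [Matrix.trace_mul_cycle]
  rw [(Matrix.mem_unitaryGroup_iff').mp (hA.eigenvectorUnitary).2]
  simp [Matrix.trace_diagonal]

private theorem arrow_far (m : ℕ) (d : Fin m → ℝ) (a : ℝ) (av : Fin m → ℂ) (ε : ℝ) (hε : 0 < ε)
    (A : Matrix (Fin (m+1)) (Fin (m+1)) ℂ)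
    (hAd : ∀ i j : Fin m, A i.castSucc j.castSucc = if i = j then (d i : ℂ) else 0)
    (hAv : ∀ i : Fin m, A i.castSucc (Fin.last m) = av i)
    (hAvc : ∀ j : Fin m, A (Fin.last m) j.castSucc = (starRingEnd ℂ) (av j))
    (hAa : A (Fin.last m) (Fin.last m) = (a : ℂ))
    (hHerm : A.IsHermitian) (k : Fin (m+1))
    (hfar : ∀ i, ε ≤ |hHerm.eigenvalues k - d i|) :
    |hHerm.eigenvalues k - a| ≤ (∑ i : Fin m, ‖av i‖^2) / ε := by
  set lam : ℝ := hHerm.eigenvalues k with hlam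
  set v : Fin (m+1) → ℂ := ⇑(hHerm.eigenvectorBasis k) with hvdef
  have hv : A *ᵥ v = lam • v := hHerm.mulVec_eigenvectorBasis k
  have habs : ∀ i : Fin m, ‖(lam : ℂ) - (d i : ℂ)‖ = |lam - d i| := by
    intro i; rw [← Complex.ofReal_sub, Complex.norm_real, Real.norm_eq_abs]
  have hne : ∀ i : Fin m, ((lam : ℂ) - (d i : ℂ)) ≠ 0 := by
    intro i
    rw [← Complex.ofReal_sub, Ne, Complex.ofReal_eq_zero]
    intro h
    have h2 := hfar i
    rw [h] at h2; simp at h2; linarith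
  have hcomp : ∀ i : Fin m, ((lam : ℂ) - d i) * v i.castSucc = av i * v (Fin.last m) := by
    intro i
    have h1 := congrFun hv i.castSucc
    simp only [Matrix.mulVec, dotProduct, Pi.smul_apply, Complex.real_smul] at h1
    rw [Fin.sum_univ_castSucc] at h1
    simp only [hAd, hAv, ite_mul, zero_mul, Finset.sum_ite_eq, Finset.mem_univ, if_true] at h1
    linear_combination -h1
  have hlast : ((lam : ℂ) - a) * v (Fin.last m)
      = ∑ i : Fin m, (starRingEnd ℂ) (av i) * v i.castSucc := by
    have h1 := congrFun hv (Fin.last m)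
    simp only [Matrix.mulVec, dotProduct, Pi.smul_apply, Complex.real_smul] at h1
    rw [Fin.sum_univ_castSucc] at h1
    simp only [hAvc, hAa] at h1
    linear_combination -h1
  have hvl : v (Fin.last m) ≠ 0 := by
    intro h0
    have hz : ∀ i : Fin m, v i.castSucc = 0 := by
      intro i
      have h2 := hcomp i
      rw [h0, mul_zero, mul_eq_zero] at h2
      exact h2.resolve_left (hne i)
    have hv0 : v = 0 := by
      funext j
      induction j using Fin.lastCases with
      | last => exact h0
      | cast i => exact hz i
    exact hHerm.eigenvectorBasis.orthonormal.ne_zero k (by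
      apply PiLp.ext; intro j
      exact congrFun hv0 j)
  have hsub : ∀ i : Fin m, v i.castSucc = av i * v (Fin.last m) / ((lam : ℂ) - d i) := by
    intro i
    rw [eq_div_iff (hne i)]
    rw [← hcomp i]; ring
  have hkey : ((lam : ℂ) - a) = ∑ i : Fin m, (starRingEnd ℂ) (av i) * av i / ((lam : ℂ) - d i) := by
    have h2 : ((lam : ℂ) - a) * v (Fin.last m)
        = (∑ i : Fin m, (starRingEnd ℂ) (av i) * av i / ((lam : ℂ) - d i)) * v (Fin.last m) := by
      rw [hlast, Finset.sum_mul]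
      apply Finset.sum_congr rfl
      intro i _
      rw [hsub i]; field_simp
    exact mul_right_cancel₀ hvl h2
  have hreal : |lam - a| = ‖(lam : ℂ) - (a : ℂ)‖ := by
    rw [← Complex.ofReal_sub, Complex.norm_real, Real.norm_eq_abs]
  rw [hreal, hkey]
  calc ‖∑ i : Fin m, (starRingEnd ℂ) (av i) * av i / ((lam : ℂ) - d i)‖
      ≤ ∑ i : Fin m, ‖(starRingEnd ℂ) (av i) * av i / ((lam : ℂ) - d i)‖ :=
        norm_sum_le _ _
    _ = ∑ i : Fin m, ‖av i‖ ^ 2 / |lam - d i| := by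
        apply Finset.sum_congr rfl
        intro i _
        rw [norm_div, norm_mul, Complex.norm_conj, habs i, sq]
    _ ≤ ∑ i : Fin m, ‖av i‖ ^ 2 / ε := by
        apply Finset.sum_le_sum
        intro i _
        apply div_le_div_of_nonneg_left ?_ hε (hfar i)
        · positivity
    _ = (∑ i : Fin m, ‖av i‖ ^ 2) / ε := by rw [Finset.sum_div]

/-- Quantitative deformation lemma for Hermitian arrowhead matrices (n = m+1 ≥ 3):
under the quadratic growth condition on a, each of the first n−1 ordered
eigenvalues is ε-close to some dᵢ, and the largest eigenvalue is close to a. -/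
theorem stmt16 (m : ℕ) (hm : 2 ≤ m) (d : Fin m → ℝ) (a : ℝ) (av : Fin m → ℂ)
    (ε : ℝ) (hε : 0 < ε)
    (A : Matrix (Fin (m + 1)) (Fin (m + 1)) ℂ)
    (hA : ∀ i j, A i j =
      if hi : i = Fin.last m then
        (if hj : j = Fin.last m then (a : ℂ)
         else (starRingEnd ℂ) (av (j.castPred hj)))
      else
        (if hj : j = Fin.last m then av (i.castPred hi)
         else if i = j then (d (i.castPred hi) : ℂ) else 0))
    (hHerm : A.IsHermitian)
    (μ : Fin (m + 1) → ℝ) (hmono : Monotone μ)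
    (henum : ∃ σ : Equiv.Perm (Fin (m + 1)), ∀ i, μ i = hHerm.eigenvalues (σ i))
    (ha : (1 / ε) * ∑ i : Fin m, ‖av i‖ ^ 2
            + ∑ i : Fin m, (d i + ((m : ℝ) - 1) * |d i|)
            + ((m : ℝ) - 1) * ε ≤ a) :
    ∃ idx : Fin m → Fin m,
      (∀ α : Fin m, |μ α.castSucc - d (idx α)| < ε) ∧
      0 ≤ μ (Fin.last m) - a ∧
      μ (Fin.last m) - a < (m : ℝ) * ε + |∑ α : Fin m, (d α - d (idx α))| := by
  obtain ⟨σ, hσ⟩ := henum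
  -- entry lemmas
  have hAd : ∀ i j : Fin m, A i.castSucc j.castSucc = if i = j then (d i : ℂ) else 0 := by
    intro i j
    rw [hA]
    rw [dif_neg (Fin.castSucc_lt_last i).ne, dif_neg (Fin.castSucc_lt_last j).ne]
    simp [Fin.castSucc_inj]
  have hAv : ∀ i : Fin m, A i.castSucc (Fin.last m) = av i := by
    intro i
    rw [hA, dif_neg (Fin.castSucc_lt_last i).ne, dif_pos rfl]
    simp
  have hAvc : ∀ j : Fin m, A (Fin.last m) j.castSucc = (starRingEnd ℂ) (av j) := by
    intro j
    rw [hA, dif_pos rfl, dif_neg (Fin.castSucc_lt_last j).ne]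
    simp
  have hAa : A (Fin.last m) (Fin.last m) = (a : ℂ) := by
    rw [hA, dif_pos rfl, dif_pos rfl]
  -- basic quantities
  set S : ℝ := ∑ i : Fin m, ‖av i‖ ^ 2 with hSdef
  have hS0 : 0 ≤ S := Finset.sum_nonneg fun i _ => by positivity
  have hne : (Finset.univ : Finset (Fin m)).Nonempty := ⟨⟨0, by omega⟩, Finset.mem_univ _⟩
  set M : ℝ := Finset.univ.sup' hne (fun i => |d i|) with hMdef
  have hMle : ∀ i, |d i| ≤ M := fun i => Finset.le_sup' (f := fun i => |d i|) (Finset.mem_univ i)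
  have hM0 : 0 ≤ M := le_trans (abs_nonneg _) (hMle ⟨0, by omega⟩)
  have hMsum : M ≤ ∑ i : Fin m, |d i| :=
    Finset.sup'_le _ _ fun i _ =>
      Finset.single_le_sum (f := fun i => |d i|) (fun i _ => abs_nonneg _) (Finset.mem_univ i)
  have hm1 : (1 : ℝ) ≤ (m : ℝ) - 1 := by
    have : (2 : ℝ) ≤ (m : ℝ) := by exact_mod_cast hm
    linarith
  -- positivity of the middle sum
  have hmid : 0 ≤ ∑ i : Fin m, (d i + ((m : ℝ) - 1) * |d i|) := by
    apply Finset.sum_nonneg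
    intro i _
    have h1 : |d i| ≤ ((m : ℝ) - 1) * |d i| := le_mul_of_one_le_left (abs_nonneg _) hm1
    have h2 : -d i ≤ |d i| := neg_le_abs _
    linarith
  -- far eigenvalues are close to a
  have hfar' : ∀ k : Fin (m+1), (∀ i, ε ≤ |μ k - d i|) → a - (1/ε) * S ≤ μ k := by
    intro k hk
    have h1 : ∀ i, ε ≤ |hHerm.eigenvalues (σ k) - d i| := by
      intro i; rw [← hσ k]; exact hk i
    have h2 := arrow_far m d a av ε hε A hAd hAv hAvc hAa hHerm (σ k) h1
    rw [← hσ k] at h2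
    have h3 : (∑ i : Fin m, ‖av i‖^2) / ε = (1/ε) * S := by
      rw [hSdef]; ring
    rw [h3] at h2
    have := abs_le.mp h2
    linarith [this.1]
  -- trace identity
  have htr : ∑ k : Fin (m+1), μ k = (∑ i : Fin m, d i) + a := by
    have h1 := arrow_trace (Fin (m+1)) A hHerm
    have h2 : A.trace = ((∑ i : Fin m, d i : ℝ) : ℂ) + (a : ℂ) := by
      rw [Matrix.trace]
      rw [Fin.sum_univ_castSucc]
      simp only [Matrix.diag_apply]
      rw [hAa]
      congr 1
      rw [Complex.ofReal_sum]
      apply Finset.sum_congr rfl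
      intro i _
      rw [hAd i i, if_pos rfl]
    have h3 : ((∑ k : Fin (m+1), hHerm.eigenvalues k : ℝ) : ℂ)
        = ((∑ i : Fin m, d i : ℝ) : ℂ) + (a : ℂ) := by
      rw [← h2, h1, Complex.ofReal_sum]
    have h4 : ∑ k : Fin (m+1), hHerm.eigenvalues k = (∑ i : Fin m, d i) + a := by
      exact_mod_cast h3
    calc ∑ k : Fin (m+1), μ k = ∑ k : Fin (m+1), hHerm.eigenvalues (σ k) :=
          Finset.sum_congr rfl fun k _ => hσ k
      _ = ∑ k : Fin (m+1), hHerm.eigenvalues k := Equiv.sum_comp σ _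
      _ = (∑ i : Fin m, d i) + a := h4
  -- largest eigenvalue at least a
  have htop : a ≤ μ (Fin.last m) := by
    have hc : ∀ j, hHerm.eigenvalues j ≤ μ (Fin.last m) := by
      intro j
      have h1 : hHerm.eigenvalues j = μ (σ.symm j) := by
        rw [hσ (σ.symm j), Equiv.apply_symm_apply]
      rw [h1]
      exact hmono (Fin.le_last _)
    have h2 := arrow_diag_le (Fin (m+1)) A hHerm (Fin.last m) _ hc
    rw [hAa] at h2
    simpa using h2
  -- lower bound on all eigenvalues
  have hlow : ∀ k : Fin (m+1), -(M + ε) < μ k := by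
    intro k
    by_cases hc : ∃ i, |μ k - d i| < ε
    · obtain ⟨i, hi⟩ := hc
      have h1 := (abs_lt.mp hi).1
      have h2 := hMle i
      have h3 : -M ≤ d i := by
        have := neg_abs_le (d i); linarith
      linarith
    · push_neg at hc
      have h1 := hfar' k hc
      have h2 : ((m:ℝ) - 1) * ε ≥ ε := le_mul_of_one_le_left hε.le hm1
      nlinarith
  -- each of first m eigenvalues is close to some d i
  have hclose : ∀ α : Fin m, ∃ i : Fin m, |μ α.castSucc - d i| < ε := by
    intro α
    by_contra hcon
    push_neg at hcon
    have h1 : a - (1/ε) * S ≤ μ α.castSucc := hfar' α.castSucc hcon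
    -- sum decomposition
    have hsplit : ∑ k : Fin (m+1), μ k
        = (∑ β : Fin m, μ β.castSucc) + μ (Fin.last m) := Fin.sum_univ_castSucc _
    have hsplit2 : μ α.castSucc + ∑ β ∈ Finset.univ.erase α, μ β.castSucc
        = ∑ β : Fin m, μ β.castSucc :=
      Finset.add_sum_erase _ (fun β => μ β.castSucc) (Finset.mem_univ α)
    have hcard : (Finset.univ.erase α).card = m - 1 := by
      rw [Finset.card_erase_of_mem (Finset.mem_univ α), Finset.card_univ, Fintype.card_fin]
    have hne2 : (Finset.univ.erase α).Nonempty := by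
      rw [← Finset.card_pos, hcard]; omega
    have herase : ((m:ℝ) - 1) * (-(M + ε)) < ∑ β ∈ Finset.univ.erase α, μ β.castSucc := by
      have h2 : ∑ _β ∈ Finset.univ.erase α, (-(M + ε)) < ∑ β ∈ Finset.univ.erase α, μ β.castSucc :=
        Finset.sum_lt_sum_of_nonempty hne2 fun β _ => hlow β.castSucc
      rw [Finset.sum_const, hcard, nsmul_eq_mul] at h2
      have h3 : ((m - 1 : ℕ) : ℝ) = (m : ℝ) - 1 := by
        have : 1 ≤ m := by omega
        push_cast [this]; ring
      rwa [h3] at h2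
    have hmidEq : ∑ i : Fin m, (d i + ((m : ℝ) - 1) * |d i|)
        = (∑ i : Fin m, d i) + ((m:ℝ) - 1) * ∑ i : Fin m, |d i| := by
      rw [Finset.sum_add_distrib, Finset.mul_sum]
    have hprod : 0 ≤ ((m:ℝ) - 1) * ((∑ i : Fin m, |d i|) - M) :=
      mul_nonneg (by linarith) (by linarith)
    rw [hmidEq] at ha
    linarith [htr, hsplit, hsplit2, htop]
  choose idx hidx using hclose
  refine ⟨idx, hidx, by linarith, ?_⟩
  have hEq : μ (Fin.last m) - a = ∑ β : Fin m, (d β - μ β.castSucc) := by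
    rw [Finset.sum_sub_distrib]
    have h1 := htr
    rw [Fin.sum_univ_castSucc] at h1
    linarith
  have hdecomp : ∑ β : Fin m, (d β - μ β.castSucc)
      = (∑ β : Fin m, (d β - d (idx β))) + ∑ β : Fin m, (d (idx β) - μ β.castSucc) := by
    rw [← Finset.sum_add_distrib]
    exact Finset.sum_congr rfl fun β _ => by ring
  have h2 : ∑ β : Fin m, (d (idx β) - μ β.castSucc) < (m : ℝ) * ε := by
    have h3 : ∑ β : Fin m, (d (idx β) - μ β.castSucc) < ∑ _β : Fin m, ε := by
      apply Finset.sum_lt_sum_of_nonempty hne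
      intro β _
      have h4 := hidx β
      rw [abs_sub_comm] at h4
      exact lt_of_le_of_lt (le_abs_self _) h4
    rwa [Finset.sum_const, Finset.card_univ, Fintype.card_fin, nsmul_eq_mul] at h3
  have h3 : ∑ β : Fin m, (d β - d (idx β)) ≤ |∑ β : Fin m, (d β - d (idx β))| := le_abs_self _
  rw [hEq, hdecomp]
  linarith
end

section
/- Let A be an n×n Hermitian arrowhead matrix (n ≥ 2) with diagonal d₁,…,d_{n-1}, a and last-column entries a₁,…,a_{n-1}. Fix ε > 0 and suppose a ≥ ((2n-3)/ε) Σᵢ|aᵢ|² + (n-1) Σᵢ|dᵢ| + (n-2)ε/(2n-3). Then the eigenvalues of A, suitably ordered as λ₁,…,λₙ, satisfy d_α − ε < λ_α < d_α + ε for each α ∈ {1,…,n-1}, and a ≤ λₙ < a + (n-1)ε. -/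
open Finset

open Matrix Module Submodule

set_option maxHeartbeats 1000000



lemma eig_sum_trace {n : ℕ} (B : Matrix (Fin n) (Fin n) ℂ) (hB : B.IsHermitian) :
    ∑ j, (hB.eigenvalues j : ℂ) = ∑ i, B i i := by
  have h := hB.spectral_theorem
  have hU : (star (hB.eigenvectorUnitary : Matrix (Fin n) (Fin n) ℂ)) *
      (hB.eigenvectorUnitary : Matrix (Fin n) (Fin n) ℂ) = 1 :=
    Matrix.mem_unitaryGroup_iff'.mp hB.eigenvectorUnitary.2
  have : Matrix.trace B = Matrix.trace
      ((hB.eigenvectorUnitary : Matrix (Fin n) (Fin n) ℂ) *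
        Matrix.diagonal (RCLike.ofReal ∘ hB.eigenvalues) *
        (star (hB.eigenvectorUnitary : Matrix (Fin n) (Fin n) ℂ))) := by
    conv_lhs => rw [h, Unitary.conjStarAlgAut_apply]
  rw [Matrix.trace_mul_cycle] at this
  rw [hU, Matrix.one_mul] at this
  have := this
  simp [Matrix.trace, Matrix.diag] at this
  simpa [Matrix.trace, Matrix.diag] using this.symm

lemma diag_eq_sum {n : ℕ} (B : Matrix (Fin n) (Fin n) ℂ) (hB : B.IsHermitian) (i : Fin n) :
    B i i = ∑ j, (hB.eigenvalues j : ℂ) *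
      (Complex.normSq ((hB.eigenvectorUnitary : Matrix (Fin n) (Fin n) ℂ) i j) : ℂ) := by
  have h := hB.spectral_theorem
  conv_lhs => rw [h, Unitary.conjStarAlgAut_apply]
  rw [Matrix.mul_apply]
  refine Finset.sum_congr rfl fun j _ => ?_
  rw [Matrix.mul_diagonal, Matrix.star_apply]
  simp [Complex.normSq_eq_conj_mul_self]
  ring

lemma row_normSq_sum {n : ℕ} (B : Matrix (Fin n) (Fin n) ℂ) (hB : B.IsHermitian) (i : Fin n) :
    ∑ j, (Complex.normSq ((hB.eigenvectorUnitary : Matrix (Fin n) (Fin n) ℂ) i j)) = 1 := by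
  have hU : (hB.eigenvectorUnitary : Matrix (Fin n) (Fin n) ℂ) *
      (star (hB.eigenvectorUnitary : Matrix (Fin n) (Fin n) ℂ)) = 1 :=
    Matrix.mem_unitaryGroup_iff.mp hB.eigenvectorUnitary.2
  have := congrArg (fun M => M i i) hU
  simp [Matrix.mul_apply, Matrix.star_apply, Matrix.one_apply] at this
  have : (∑ j, ((hB.eigenvectorUnitary : Matrix (Fin n) (Fin n) ℂ) i j) *
      (starRingEnd ℂ) ((hB.eigenvectorUnitary : Matrix (Fin n) (Fin n) ℂ) i j)) = 1 := this
  have h2 := congrArg Complex.re this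
  simpa [Complex.mul_conj] using h2




lemma euclid_sum_apply {n : ℕ} {ι : Type*} (s : Finset ι) (f : ι → EuclideanSpace ℂ (Fin n)) (i : Fin n) :
    (∑ u ∈ s, f u) i = ∑ u ∈ s, f u i := by
  classical
  induction s using Finset.cons_induction with
  | empty => rfl
  | cons a s ha ih => rw [Finset.sum_cons, Finset.sum_cons, ← ih]; rfl

local notation "⟪" x ", " y "⟫" => @inner ℂ _ _ x y

lemma interlace_aux {n : ℕ} (B : Matrix (Fin n) (Fin n) ℂ) (hB : B.IsHermitian) (c : ℝ)
    (J T : Finset (Fin n))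
    (hJ : ∀ j ∈ J, c < hB.eigenvalues j)
    (hT : ∀ x : Fin n → ℂ, (∀ i, i ∉ T → x i = 0) →
      ((star x) ⬝ᵥ (B *ᵥ x)).re ≤ c * ∑ i, Complex.normSq (x i))
    (hcard : n < J.card + T.card) : False := by
  classical
  set E := EuclideanSpace ℂ (Fin n)
  set v : Fin n → E := fun j => hB.eigenvectorBasis j with hv_def
  have hv : Orthonormal ℂ v := hB.eigenvectorBasis.orthonormal
  set e : Fin n → E := fun i => EuclideanSpace.single i (1:ℂ) with he_def
  have he_eq : e = ⇑(EuclideanSpace.basisFun (Fin n) ℂ) :=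
    funext fun i => (EuclideanSpace.basisFun_apply (Fin n) ℂ i).symm
  have he : Orthonormal ℂ e := he_eq ▸ (EuclideanSpace.basisFun (Fin n) ℂ).orthonormal
  have hv_inj : Function.Injective v := hv.linearIndependent.injective
  have he_inj : Function.Injective e := he.linearIndependent.injective
  set VS : Finset E := J.image v with hVS_def
  set WS : Finset E := T.image e with hWS_def
  have hVS_card : VS.card = J.card := Finset.card_image_of_injective _ hv_inj
  have hWS_card : WS.card = T.card := Finset.card_image_of_injective _ he_inj
  set V : Submodule ℂ E := span ℂ (VS : Set E) with hV_def
  set W : Submodule ℂ E := span ℂ (WS : Set E) with hW_def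
  have hVfr : finrank ℂ V = J.card := by
    rw [← hVS_card]
    refine finrank_span_finset_eq_card (s := VS) ?_
    refine ((linearIndepOn_id_range_iff hv_inj).mpr hv.linearIndependent).mono ?_
    intro x hx
    rcases Finset.mem_image.mp (Finset.mem_coe.mp hx) with ⟨j, _, rfl⟩
    exact ⟨j, rfl⟩
  have hWfr : finrank ℂ W = T.card := by
    rw [← hWS_card]
    refine finrank_span_finset_eq_card (s := WS) ?_
    refine ((linearIndepOn_id_range_iff he_inj).mpr he.linearIndependent).mono ?_
    intro x hx
    rcases Finset.mem_image.mp (Finset.mem_coe.mp hx) with ⟨j, _, rfl⟩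
    exact ⟨j, rfl⟩
  have hE : finrank ℂ E = n := finrank_euclideanSpace_fin
  have hsup : finrank ℂ ↥(V ⊔ W) ≤ n := le_trans (Submodule.finrank_le _) (le_of_eq hE)
  have hinf : 0 < finrank ℂ ↥(V ⊓ W) := by
    have h := Submodule.finrank_sup_add_finrank_inf_eq V W
    omega
  obtain ⟨⟨x, hxVW⟩, hxne⟩ := Module.finrank_pos_iff_exists_ne_zero.mp hinf
  have hxV : x ∈ V := hxVW.1
  have hxW : x ∈ W := hxVW.2
  have hx0 : x ≠ 0 := fun h => hxne (Subtype.ext h)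
  -- coefficients over J
  obtain ⟨g, hg⟩ := mem_span_finset.mp hxV
  set l : Fin n → ℂ := fun j => g (v j) with hl_def
  have hx_sum : (∑ j ∈ J, l j • v j) = x := by
    rw [← hg.2, hVS_def, Finset.sum_image (fun a _ b _ h => hv_inj h)]
  -- support of x
  have hsupp : ∀ i, i ∉ T → x i = 0 := by
    obtain ⟨f, hf⟩ := mem_span_finset.mp hxW
    intro i hi
    have : x i = ∑ u ∈ WS, f u * (u i) := by
      rw [← hf.2, euclid_sum_apply]
      rfl
    rw [this]
    refine Finset.sum_eq_zero fun u hu => ?_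
    simp only [hWS_def, Finset.mem_image] at hu
    obtain ⟨i', hi', rfl⟩ := hu
    have : i' ≠ i := fun h => hi (h ▸ hi')
    simp [he_def, EuclideanSpace.single_apply, Ne.symm this]
  -- B *ᵥ x
  have hBx : (B *ᵥ x : Fin n → ℂ) = (∑ j ∈ J, (l j * (hB.eigenvalues j : ℂ)) • v j : E) := by
    rw [← hx_sum]
    have : (B *ᵥ (∑ j ∈ J, l j • v j : E) : Fin n → ℂ)
        = ∑ j ∈ J, l j • (B *ᵥ (v j : Fin n → ℂ)) := by
      show B.mulVecLin _ = _
      rw [WithLp.ofLp_sum, map_sum]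
      refine Finset.sum_congr rfl fun j _ => ?_
      simp [Matrix.mulVecLin_apply]
      show B *ᵥ (l j • (v j : Fin n → ℂ)) = _
      rw [Matrix.mulVec_smul]
    rw [this, WithLp.ofLp_sum]
    refine Finset.sum_congr rfl fun j _ => ?_
    have hmv : B *ᵥ (v j : Fin n → ℂ) = hB.eigenvalues j • (v j : Fin n → ℂ) :=
      hB.mulVec_eigenvectorBasis j
    rw [hmv]
    funext i
    show l j * (hB.eigenvalues j • ((v j : Fin n → ℂ) i)) = (l j * (hB.eigenvalues j : ℂ)) * ((v j : Fin n → ℂ) i)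
    rw [Complex.real_smul]
    ring
  -- inner products
  have h1 : ⟪x, (WithLp.toLp 2 (B *ᵥ x) : E)⟫ = ∑ j ∈ J, (starRingEnd ℂ) (l j) * (l j * (hB.eigenvalues j : ℂ)) := by
    calc ⟪x, (WithLp.toLp 2 (B *ᵥ x) : E)⟫
        = ⟪(∑ j ∈ J, l j • v j : E), (∑ j ∈ J, (l j * (hB.eigenvalues j : ℂ)) • v j : E)⟫ := by
          rw [hx_sum, hBx, WithLp.toLp_ofLp]
      _ = _ := hv.inner_sum _ _ _
  have h2 : ⟪x, x⟫ = ∑ j ∈ J, (starRingEnd ℂ) (l j) * l j := by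
    conv_lhs => rw [← hx_sum]
    exact hv.inner_sum _ _ _
  have hdot : ⟪x, (WithLp.toLp 2 (B *ᵥ x) : E)⟫ = (star (x : Fin n → ℂ)) ⬝ᵥ (B *ᵥ (x : Fin n → ℂ)) := by
    rw [EuclideanSpace.inner_eq_star_dotProduct, dotProduct_comm]
  have hdot2 : ⟪x, x⟫ = (star (x : Fin n → ℂ)) ⬝ᵥ (x : Fin n → ℂ) := by
    rw [EuclideanSpace.inner_eq_star_dotProduct, dotProduct_comm]
  -- norms
  have hnormx : ∑ i, Complex.normSq (x i) = ∑ j ∈ J, Complex.normSq (l j) := by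
    have := congrArg Complex.re h2
    rw [hdot2] at this
    simp only [dotProduct, Pi.star_apply] at this
    calc ∑ i, Complex.normSq (x i) = (∑ i, (star (x i)) * x i).re := by
          rw [Complex.re_sum]
          exact Finset.sum_congr rfl fun i _ => by
            simp [Complex.normSq_eq_conj_mul_self, Complex.normSq_apply]
      _ = (∑ j ∈ J, (starRingEnd ℂ) (l j) * l j).re := by rw [← this]
      _ = ∑ j ∈ J, Complex.normSq (l j) := by
          rw [Complex.re_sum]
          exact Finset.sum_congr rfl fun j _ => by
            simp [Complex.normSq_eq_conj_mul_self, Complex.normSq_apply]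
  -- quadratic form value
  have hq : ((star (x : Fin n → ℂ)) ⬝ᵥ (B *ᵥ (x : Fin n → ℂ))).re
      = ∑ j ∈ J, hB.eigenvalues j * Complex.normSq (l j) := by
    rw [← hdot, h1, Complex.re_sum]
    refine Finset.sum_congr rfl fun j _ => ?_
    have : (starRingEnd ℂ) (l j) * (l j * (hB.eigenvalues j : ℂ))
        = (hB.eigenvalues j : ℂ) * ((starRingEnd ℂ) (l j) * l j) := by ring
    rw [this]
    simp [Complex.normSq_eq_conj_mul_self, Complex.normSq_apply]
  -- some coefficient nonzero
  have hex : ∃ j ∈ J, l j ≠ 0 := by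
    by_contra hno
    push_neg at hno
    apply hx0
    rw [← hx_sum]
    exact Finset.sum_eq_zero fun j hj => by rw [hno j hj, zero_smul]
  obtain ⟨j₀, hj₀J, hj₀⟩ := hex
  -- strict inequality
  have hstrict : c * ∑ j ∈ J, Complex.normSq (l j) < ∑ j ∈ J, hB.eigenvalues j * Complex.normSq (l j) := by
    rw [Finset.mul_sum]
    refine Finset.sum_lt_sum (fun j hj => ?_) ⟨j₀, hj₀J, ?_⟩
    · rcases eq_or_ne (l j) 0 with h | h
      · simp [h]
      · exact mul_le_mul_of_nonneg_right (le_of_lt (hJ j hj)) (Complex.normSq_nonneg _)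
    · have : 0 < Complex.normSq (l j₀) := Complex.normSq_pos.mpr hj₀
      exact mul_lt_mul_of_pos_right (hJ j₀ hj₀J) this
  have hup := hT x hsupp
  rw [hq, hnormx] at hup
  exact absurd hup (not_le.mpr hstrict)

lemma diag_re_le_max {n : ℕ} (B : Matrix (Fin n) (Fin n) ℂ) (hB : B.IsHermitian) (i : Fin n)
    (M : ℝ) (h : ∀ j, hB.eigenvalues j ≤ M) : (B i i).re ≤ M := by
  have h1 := diag_eq_sum B hB i
  have h2 := row_normSq_sum B hB i
  have h3 := congrArg Complex.re h1
  rw [Complex.re_sum] at h3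
  have h4 : (B i i).re = ∑ j, hB.eigenvalues j *
      Complex.normSq ((hB.eigenvectorUnitary : Matrix (Fin n) (Fin n) ℂ) i j) := by
    rw [h3]
    refine Finset.sum_congr rfl fun j _ => ?_
    rw [← Complex.ofReal_mul]
    exact Complex.ofReal_re _
  rw [h4]
  calc ∑ j, hB.eigenvalues j * Complex.normSq ((hB.eigenvectorUnitary : Matrix (Fin n) (Fin n) ℂ) i j)
      ≤ ∑ j, M * Complex.normSq ((hB.eigenvectorUnitary : Matrix (Fin n) (Fin n) ℂ) i j) :=
        Finset.sum_le_sum fun j _ =>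
          mul_le_mul_of_nonneg_right (h j) (Complex.normSq_nonneg _)
    _ = M := by rw [← Finset.mul_sum, h2, mul_one]

/-- Quantitative lemma (Lemma A.1): with the stronger quadratic growth condition
on a, the suitably ordered eigenvalues satisfy d_α − ε < λ_α < d_α + ε for
α < n and a ≤ λₙ < a + (n−1)ε, where n = m+1 ≥ 2. -/
theorem stmt17 (m : ℕ) (hm : 1 ≤ m) (d : Fin m → ℝ) (a : ℝ) (av : Fin m → ℂ)
    (ε : ℝ) (hε : 0 < ε)
    (A : Matrix (Fin (m + 1)) (Fin (m + 1)) ℂ)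
    (hA : ∀ i j, A i j =
      if hi : i = Fin.last m then
        (if hj : j = Fin.last m then (a : ℂ)
         else (starRingEnd ℂ) (av (j.castPred hj)))
      else
        (if hj : j = Fin.last m then av (i.castPred hi)
         else if i = j then (d (i.castPred hi) : ℂ) else 0))
    (hHerm : A.IsHermitian)
    (ha : ((2 * (m : ℝ) - 1) / ε) * ∑ i : Fin m, ‖av i‖ ^ 2
            + (m : ℝ) * ∑ i : Fin m, |d i|
            + ((m : ℝ) - 1) * ε / (2 * (m : ℝ) - 1) ≤ a) :
    ∃ μ : Fin (m + 1) → ℝ,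
      (∃ σ : Equiv.Perm (Fin (m + 1)), ∀ i, μ i = hHerm.eigenvalues (σ i)) ∧
      (∀ α : Fin m, d α - ε < μ α.castSucc ∧ μ α.castSucc < d α + ε) ∧
      a ≤ μ (Fin.last m) ∧ μ (Fin.last m) < a + (m : ℝ) * ε := by
  classical
  set lam := hHerm.eigenvalues with hlam
  set τ : Equiv.Perm (Fin (m+1)) := Tuple.sort lam with hτ
  have hmono : Monotone (lam ∘ τ) := Tuple.monotone_sort lam
  set ρ : Equiv.Perm (Fin m) := Tuple.sort d with hρ
  have hdmono : Monotone (d ∘ ρ) := Tuple.monotone_sort d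
  set M := lam (τ (Fin.last m)) with hM
  have hMmax : ∀ j, lam j ≤ M := fun j => by
    have h := hmono (Fin.le_last (τ.symm j))
    simpa using h
  -- numeric setup
  set S := ∑ i, Complex.normSq (av i) with hSdef
  set Ds := ∑ i, |d i| with hDsdef
  have hm1 : (1:ℝ) ≤ (m:ℝ) := by exact_mod_cast hm
  have hS0 : 0 ≤ S := Finset.sum_nonneg fun i _ => Complex.normSq_nonneg _
  have hDs0 : 0 ≤ Ds := Finset.sum_nonneg fun i _ => abs_nonneg _
  have hdDs : ∀ α, d α ≤ Ds := fun α =>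
    le_trans (le_abs_self _) (Finset.single_le_sum (fun i _ => abs_nonneg (d i)) (Finset.mem_univ α))
  have ha' : (2*(m:ℝ)-1)/ε * S + (m:ℝ)*Ds + ((m:ℝ)-1)*ε/(2*(m:ℝ)-1) ≤ a := by
    have : ∑ i : Fin m, ‖av i‖ ^ 2 = S :=
      Finset.sum_congr rfl fun i _ => Complex.sq_norm _
    rwa [this] at ha
  have hDa : S / ε + Ds ≤ a := by
    have h1 : S/ε ≤ (2*(m:ℝ)-1)/ε * S := by
      rw [div_mul_eq_mul_div, div_le_div_iff₀ hε hε]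
      nlinarith [mul_nonneg (mul_nonneg (by linarith : (0:ℝ) ≤ 2*(m:ℝ)-2) hS0) hε.le]
    have h2 : Ds ≤ (m:ℝ)*Ds := by nlinarith
    have h3 : 0 ≤ ((m:ℝ)-1)*ε/(2*(m:ℝ)-1) := by
      apply div_nonneg (by nlinarith) (by nlinarith)
    linarith
  have hkey : S + ε * Ds ≤ ε * a := by
    have := mul_le_mul_of_nonneg_left hDa (le_of_lt hε)
    rw [mul_add, mul_div_cancel₀ _ (ne_of_gt hε)] at this
    linarith
  have hDsa : Ds ≤ a := by
    have : 0 ≤ S / ε := div_nonneg hS0 (le_of_lt hε)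
    linarith
  -- row expansions of A *ᵥ x
  have hrow : ∀ (x : Fin (m+1) → ℂ) (α : Fin m),
      (A *ᵥ x) α.castSucc = (d α : ℂ) * x α.castSucc + av α * x (Fin.last m) := by
    intro x α
    show (∑ j, A α.castSucc j * x j) = _
    rw [Fin.sum_univ_castSucc]
    have hne : (α.castSucc : Fin (m+1)) ≠ Fin.last m := (Fin.castSucc_lt_last α).ne
    have h1 : ∀ β : Fin m, A α.castSucc β.castSucc
        = if α = β then (d α : ℂ) else 0 := by
      intro β
      rw [hA]
      have hne2 : (β.castSucc : Fin (m+1)) ≠ Fin.last m := (Fin.castSucc_lt_last β).ne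
      simp only [dif_neg hne, dif_neg hne2, Fin.castPred_castSucc, Fin.castSucc_inj]
    have h2 : A α.castSucc (Fin.last m) = av α := by
      rw [hA]
      simp [dif_neg hne, Fin.castPred_castSucc]
    rw [h2]
    congr 1
    calc (∑ β : Fin m, A α.castSucc β.castSucc * x β.castSucc)
        = ∑ β : Fin m, (if α = β then (d α : ℂ) else 0) * x β.castSucc :=
          Finset.sum_congr rfl fun β _ => by rw [h1]
      _ = (d α : ℂ) * x α.castSucc := by simp [ite_mul]
  have hrowlast : ∀ (x : Fin (m+1) → ℂ),
      (A *ᵥ x) (Fin.last m)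
        = (∑ α : Fin m, (starRingEnd ℂ) (av α) * x α.castSucc) + (a : ℂ) * x (Fin.last m) := by
    intro x
    show (∑ j, A (Fin.last m) j * x j) = _
    rw [Fin.sum_univ_castSucc]
    congr 1
    · refine Finset.sum_congr rfl fun β _ => ?_
      have hne2 : (β.castSucc : Fin (m+1)) ≠ Fin.last m := (Fin.castSucc_lt_last β).ne
      rw [hA]
      simp [dif_neg hne2, Fin.castPred_castSucc]
    · rw [hA]; simp
  -- trace identity
  have htr : (∑ j, lam j) = (∑ α, d α) + a := by
    have h1 := eig_sum_trace A hHerm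
    have h2 : (∑ i, A i i) = ((∑ α, d α : ℝ) : ℂ) + (a:ℂ) := by
      rw [Fin.sum_univ_castSucc]
      congr 1
      · rw [Complex.ofReal_sum]
        refine Finset.sum_congr rfl fun α _ => ?_
        rw [hA]
        have hne : (α.castSucc : Fin (m+1)) ≠ Fin.last m := (Fin.castSucc_lt_last α).ne
        simp [dif_neg hne, Fin.castPred_castSucc]
      · rw [hA]; simp
    rw [h2] at h1
    have := congrArg Complex.re h1
    rw [Complex.re_sum] at this
    simpa using this
  -- a ≤ M
  have haM : a ≤ M := by
    have h1 : (A (Fin.last m) (Fin.last m)).re = a := by rw [hA]; simp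
    have := diag_re_le_max A hHerm (Fin.last m) M hMmax
    rwa [h1] at this
  -- interlacing: sorted eigenvalue k is at most sorted d k
  have hinterlace : ∀ k : Fin m, lam (τ k.castSucc) ≤ d (ρ k) := by
    intro k
    by_contra hcon
    push_neg at hcon
    set c := d (ρ k) with hc
    set J : Finset (Fin (m+1)) := (Finset.Ici (k.castSucc)).image τ with hJdef
    set T : Finset (Fin (m+1)) := ((Finset.Iic k).image ρ).image Fin.castSucc with hTdef
    have hJ : ∀ j ∈ J, c < lam j := by
      intro j hj
      rcases Finset.mem_image.mp hj with ⟨l, hl, rfl⟩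
      have hkl : k.castSucc ≤ l := Finset.mem_Ici.mp hl
      exact lt_of_lt_of_le hcon (hmono hkl)
    have hT : ∀ x : Fin (m+1) → ℂ, (∀ i, i ∉ T → x i = 0) →
        ((star x) ⬝ᵥ (A *ᵥ x)).re ≤ c * ∑ i, Complex.normSq (x i) := by
      intro x hx
      have hxlast : x (Fin.last m) = 0 := by
        refine hx _ fun hmem => ?_
        rcases Finset.mem_image.mp hmem with ⟨β, _, hβ⟩
        exact (Fin.castSucc_lt_last β).ne hβ
      have hq : ((star x) ⬝ᵥ (A *ᵥ x)) = ∑ α : Fin m, (d α : ℂ) *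
          ((starRingEnd ℂ) (x α.castSucc) * x α.castSucc) := by
        show (∑ i, (star x) i * (A *ᵥ x) i) = _
        rw [Fin.sum_univ_castSucc]
        have hlast0 : (star x) (Fin.last m) * (A *ᵥ x) (Fin.last m) = 0 := by
          simp [Pi.star_apply, hxlast]
        rw [hlast0, add_zero]
        refine Finset.sum_congr rfl fun α _ => ?_
        rw [hrow x α, hxlast]
        simp [Pi.star_apply]
        ring
      have hqre : ((star x) ⬝ᵥ (A *ᵥ x)).re
          = ∑ α : Fin m, d α * Complex.normSq (x α.castSucc) := by
        rw [hq, Complex.re_sum]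
        refine Finset.sum_congr rfl fun α _ => ?_
        rw [← Complex.normSq_eq_conj_mul_self, ← Complex.ofReal_mul]
        exact Complex.ofReal_re _
      rw [hqre]
      have hsum_eq : ∑ i, Complex.normSq (x i) = ∑ α : Fin m, Complex.normSq (x α.castSucc) := by
        rw [Fin.sum_univ_castSucc, hxlast]
        simp
      rw [hsum_eq, Finset.mul_sum]
      refine Finset.sum_le_sum fun α _ => ?_
      by_cases hαT : α ∈ (Finset.Iic k).image ρ
      · rcases Finset.mem_image.mp hαT with ⟨l, hl, rfl⟩
        have : d (ρ l) ≤ c := hdmono (Finset.mem_Iic.mp hl)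
        exact mul_le_mul_of_nonneg_right this (Complex.normSq_nonneg _)
      · have : x α.castSucc = 0 := by
          refine hx _ fun hmem => ?_
          rcases Finset.mem_image.mp hmem with ⟨β, hβ, hββ⟩
          exact hαT ((Fin.castSucc_injective m hββ) ▸ hβ)
        rw [this]
        simp
    have hcards : m + 1 < J.card + T.card := by
      have hJc : J.card = (m+1) - k := by
        rw [hJdef, Finset.card_image_of_injective _ τ.injective, Fin.card_Ici]
        simp [Fin.coe_castSucc]
      have hTc : T.card = k + 1 := by
        rw [hTdef, Finset.card_image_of_injective _ (Fin.castSucc_injective m),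
          Finset.card_image_of_injective _ ρ.injective, Fin.card_Iic]
      rw [hJc, hTc]
      have := k.isLt
      omega
    exact interlace_aux A hHerm c J T hJ hT hcards
  -- top eigenvalue below a + ε
  have htop : M < a + ε := by
    by_contra hcon
    push_neg at hcon
    set w : Fin (m+1) → ℂ := (hHerm.eigenvectorBasis (τ (Fin.last m))).ofLp with hwdef
    have hw : A *ᵥ w = lam (τ (Fin.last m)) • w := hHerm.mulVec_eigenvectorBasis (τ (Fin.last m))
    have hwne : ∃ i, w i ≠ 0 := by
      by_contra hno
      push_neg at hno
      have : hHerm.eigenvectorBasis (τ (Fin.last m)) = 0 := by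
          ext i; exact hno i
      exact hHerm.eigenvectorBasis.orthonormal.ne_zero (τ (Fin.last m)) this
    set t := w (Fin.last m) with htdef
    set u : Fin m → ℂ := fun α => w α.castSucc with hudef
    have eq1 : ∀ α, ((M : ℂ) - (d α : ℂ)) * u α = av α * t := by
      intro α
      have h1 := congrFun hw α.castSucc
      rw [hrow w α] at h1
      have h2 : (M • w) α.castSucc = (M:ℂ) * w α.castSucc := by
        show M • (w α.castSucc) = _
        rw [Complex.real_smul]
      rw [h2] at h1
      show ((M:ℂ) - (d α : ℂ)) * w α.castSucc = av α * w (Fin.last m)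
      linear_combination h1.symm
    have eq2 : ((M : ℂ) - (a : ℂ)) * t = ∑ α, (starRingEnd ℂ) (av α) * u α := by
      have h1 := congrFun hw (Fin.last m)
      rw [hrowlast w] at h1
      have h2 : (M • w) (Fin.last m) = (M:ℂ) * w (Fin.last m) := by
        show M • (w (Fin.last m)) = _
        rw [Complex.real_smul]
      rw [h2] at h1
      show ((M:ℂ) - (a : ℂ)) * w (Fin.last m) = ∑ α, (starRingEnd ℂ) (av α) * w α.castSucc
      linear_combination (-1 : ℂ) * h1
    by_cases ht : t = 0
    · -- all mass on the d-part: M equals some d α ≤ Ds < a + ε ≤ M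
      obtain ⟨i, hi⟩ := hwne
      have hu : ∃ α, u α ≠ 0 := by
        rcases Fin.eq_castSucc_or_eq_last i with ⟨α, rfl⟩ | rfl
        · exact ⟨α, hi⟩
        · exact absurd ht hi
      obtain ⟨α, hα⟩ := hu
      have h0 : ((M:ℂ) - (d α : ℂ)) * u α = 0 := by rw [eq1 α, ht, mul_zero]
      have h1 : ((M:ℂ) - (d α : ℂ)) = 0 := by
        rcases mul_eq_zero.mp h0 with h | h
        · exact h
        · exact absurd h hα
      have hMd : M = d α := by
        have h2 := congrArg Complex.re h1
        simp at h2
        linarith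
      linarith [hdDs α, hDsa]
    · -- eigenvector has weight on the arrow head
      have key1 : ∀ α, (M - d α) * ((M - d α) * Complex.normSq (u α))
          = Complex.normSq (av α) * Complex.normSq t := by
        intro α
        have h1 := congrArg Complex.normSq (eq1 α)
        rw [_root_.map_mul, _root_.map_mul] at h1
        have hcast : ((M:ℂ) - (d α:ℂ)) = ((M - d α : ℝ) : ℂ) := by push_cast; ring
        rw [hcast, Complex.normSq_ofReal] at h1
        linear_combination h1
      have key2 : (M - a) * Complex.normSq t = ∑ α, (M - d α) * Complex.normSq (u α) := by
        have h1 : (((M:ℂ) - (a:ℂ)) * t) * (starRingEnd ℂ) t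
            = ∑ α, (starRingEnd ℂ) (av α) * u α * (starRingEnd ℂ) t := by
          rw [eq2, Finset.sum_mul]
        have h2 : ∀ α, (starRingEnd ℂ) (av α) * u α * (starRingEnd ℂ) t
            = ((M - d α : ℝ) : ℂ) * ((Complex.normSq (u α) : ℝ) : ℂ) := by
          intro α
          have e := eq1 α
          have hcast : ((M:ℂ) - (d α:ℂ)) = ((M - d α : ℝ) : ℂ) := by push_cast; ring
          calc (starRingEnd ℂ) (av α) * u α * (starRingEnd ℂ) t
              = (starRingEnd ℂ) (av α * t) * u α := by rw [_root_.map_mul]; ring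
            _ = (starRingEnd ℂ) (((M:ℂ) - (d α:ℂ)) * u α) * u α := by rw [e]
            _ = ((M - d α : ℝ) : ℂ) * ((starRingEnd ℂ) (u α) * u α) := by
                rw [hcast, _root_.map_mul, Complex.conj_ofReal]; ring
            _ = ((M - d α : ℝ) : ℂ) * ((Complex.normSq (u α) : ℝ) : ℂ) := by
                rw [Complex.normSq_eq_conj_mul_self]
        rw [Finset.sum_congr rfl (fun α _ => h2 α)] at h1
        have h3 : (((M:ℂ) - (a:ℂ)) * t) * (starRingEnd ℂ) t
            = ((M - a : ℝ) : ℂ) * ((Complex.normSq t : ℝ) : ℂ) := by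
          have hcast : ((M:ℂ) - (a:ℂ)) = ((M - a : ℝ) : ℂ) := by push_cast; ring
          rw [hcast, mul_assoc, Complex.mul_conj]
        rw [h3] at h1
        have h4 := congrArg Complex.re h1
        rw [Complex.re_sum] at h4
        simp only [← Complex.ofReal_mul, Complex.ofReal_re] at h4
        exact h4
      have hG : ∀ α, a + ε - Ds ≤ M - d α := fun α => by
        have := hdDs α; linarith
      have hGpos : 0 < a + ε - Ds := by linarith
      have step : ∀ α, (a + ε - Ds) * ((M - d α) * Complex.normSq (u α))
          ≤ Complex.normSq (av α) * Complex.normSq t := by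
        intro α
        have hXnn : 0 ≤ (M - d α) * Complex.normSq (u α) :=
          mul_nonneg (by linarith [hG α]) (Complex.normSq_nonneg _)
        nlinarith [key1 α, hG α, hXnn]
      have hsum2 : (a + ε - Ds) * ((M - a) * Complex.normSq t) ≤ S * Complex.normSq t := by
        rw [key2, Finset.mul_sum]
        calc (∑ α, (a + ε - Ds) * ((M - d α) * Complex.normSq (u α)))
            ≤ ∑ α, Complex.normSq (av α) * Complex.normSq t :=
              Finset.sum_le_sum fun α _ => step α
          _ = S * Complex.normSq t := by rw [← Finset.sum_mul]
      have ht2 : 0 < Complex.normSq t := Complex.normSq_pos.mpr ht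
      have hfin : (a + ε - Ds) * ε ≤ S := by
        have h5 : (a + ε - Ds) * (ε * Complex.normSq t)
            ≤ (a + ε - Ds) * ((M - a) * Complex.normSq t) := by
          apply mul_le_mul_of_nonneg_left _ hGpos.le
          apply mul_le_mul_of_nonneg_right _ ht2.le
          linarith
        have h6 := le_trans h5 hsum2
        have h7 : (a + ε - Ds) * ε * Complex.normSq t ≤ S * Complex.normSq t := by
          calc (a + ε - Ds) * ε * Complex.normSq t
              = (a + ε - Ds) * (ε * Complex.normSq t) := by ring
            _ ≤ S * Complex.normSq t := h6
        exact le_of_mul_le_mul_right h7 ht2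
      nlinarith [hkey, hfin]
  -- the sum of the gaps equals M - a
  have hsum_gap : ∑ k : Fin m, (d (ρ k) - lam (τ k.castSucc)) = M - a := by
    have e1 : ∑ k : Fin m, d (ρ k) = ∑ α, d α := Equiv.sum_comp ρ d
    have e2 : ∑ i : Fin (m+1), lam (τ i) = ∑ j, lam j := Equiv.sum_comp τ lam
    rw [Fin.sum_univ_castSucc] at e2
    rw [Finset.sum_sub_distrib, e1]
    have e3 : ∑ k : Fin m, lam (τ k.castSucc) = (∑ j, lam j) - M := by
      rw [← e2]; ring
    rw [e3, htr]
    ring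
  have hgap : ∀ k : Fin m, d (ρ k) - lam (τ k.castSucc) < ε := by
    intro k
    have hterm : ∀ l : Fin m, l ∈ Finset.univ →
        0 ≤ d (ρ l) - lam (τ l.castSucc) := fun l _ => by linarith [hinterlace l]
    have h1 := Finset.single_le_sum hterm (Finset.mem_univ k)
    rw [hsum_gap] at h1
    linarith
  -- assemble the permutation
  set g : Equiv.Perm (Fin (m+1)) :=
    { toFun := fun i => if h : i = Fin.last m then Fin.last m
        else (ρ.symm (i.castPred h)).castSucc
      invFun := fun i => if h : i = Fin.last m then Fin.last m
        else (ρ (i.castPred h)).castSucc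
      left_inv := by
        intro i
        by_cases h : i = Fin.last m
        · simp [h]
        · simp only [dif_neg h, dif_neg (Fin.castSucc_lt_last _).ne,
            Fin.castPred_castSucc, Equiv.apply_symm_apply, Fin.castSucc_castPred]
      right_inv := by
        intro i
        by_cases h : i = Fin.last m
        · simp [h]
        · simp only [dif_neg h, dif_neg (Fin.castSucc_lt_last _).ne,
            Fin.castPred_castSucc, Equiv.symm_apply_apply, Fin.castSucc_castPred] } with hg
  refine ⟨fun i => lam ((g.trans τ) i), ⟨g.trans τ, fun i => rfl⟩, ?_, ?_, ?_⟩
  · intro α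
    show d α - ε < lam ((g.trans τ) α.castSucc) ∧ lam ((g.trans τ) α.castSucc) < d α + ε
    have hgα : g α.castSucc = (ρ.symm α).castSucc := by
      show (if h : α.castSucc = Fin.last m then Fin.last m
        else (ρ.symm ((α.castSucc).castPred h)).castSucc) = _
      rw [dif_neg (Fin.castSucc_lt_last α).ne, Fin.castPred_castSucc]
    have hval : lam ((g.trans τ) α.castSucc) = lam (τ (ρ.symm α).castSucc) := by
      rw [Equiv.trans_apply, hgα]
    rw [hval]
    have hd : d (ρ (ρ.symm α)) = d α := by rw [Equiv.apply_symm_apply]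
    constructor
    · have := hgap (ρ.symm α); rw [hd] at this; linarith
    · have := hinterlace (ρ.symm α); rw [hd] at this; linarith
  · have hglast : g (Fin.last m) = Fin.last m := by
      show (if h : (Fin.last m : Fin (m+1)) = Fin.last m then Fin.last m
        else (ρ.symm ((Fin.last m).castPred h)).castSucc) = _
      rw [dif_pos rfl]
    show a ≤ lam ((g.trans τ) (Fin.last m))
    rw [Equiv.trans_apply, hglast]
    exact haM
  · have hglast : g (Fin.last m) = Fin.last m := by
      show (if h : (Fin.last m : Fin (m+1)) = Fin.last m then Fin.last m
        else (ρ.symm ((Fin.last m).castPred h)).castSucc) = _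
      rw [dif_pos rfl]
    show lam ((g.trans τ) (Fin.last m)) < a + (m:ℝ) * ε
    rw [Equiv.trans_apply, hglast]
    have hεm : ε ≤ (m:ℝ) * ε := by nlinarith
    calc lam (τ (Fin.last m)) = M := rfl
      _ < a + ε := htop
      _ ≤ a + (m:ℝ) * ε := by linarith
end

section
/- Let n ≥ 2 and let λ ∈ ℝⁿ satisfy μᵢ = Σ_{j≠i} λⱼ > 0 for all i and Σᵢ log μᵢ = ψ. Then Σᵢ fᵢ(λ) ≥ n^{(n-2)/(n-1)} (Σᵢ λᵢ)^{1/(n-1)} e^{-ψ/(n-1)}, where fᵢ(λ) = Σ_{j≠i} 1/μⱼ. -/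
open Finset


/-- AM-GM: m^m * ∏ x ≤ (∑ x)^m. -/
lemma amgm_prod {ι : Type*} (s : Finset ι) (x : ι → ℝ) (hx : ∀ i ∈ s, 0 ≤ x i) :
    (s.card : ℝ) ^ s.card * ∏ i ∈ s, x i ≤ (∑ i ∈ s, x i) ^ s.card := by
  rcases Nat.eq_zero_or_pos s.card with h0 | hpos
  · simp [Finset.card_eq_zero.mp h0]
  have hm : (0:ℝ) < s.card := by exact_mod_cast hpos
  have hgm := Real.geom_mean_le_arith_mean_weighted s (fun _ => (s.card : ℝ)⁻¹) x
    (fun i _ => by positivity)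
    (by simp [Finset.sum_const, mul_inv_cancel₀ hm.ne'])
    hx
  -- hgm : ∏ x i ^ (card⁻¹) ≤ ∑ (card⁻¹) * x i
  have h1 : ∏ i ∈ s, x i ^ ((s.card : ℝ)⁻¹) = (∏ i ∈ s, x i) ^ ((s.card : ℝ)⁻¹) := by
    rw [← Real.finset_prod_rpow s x hx]
  have h2 : ∑ i ∈ s, (s.card : ℝ)⁻¹ * x i = (s.card : ℝ)⁻¹ * ∑ i ∈ s, x i := by
    rw [Finset.mul_sum]
  rw [h1, h2] at hgm
  have hP : (0:ℝ) ≤ ∏ i ∈ s, x i := Finset.prod_nonneg hx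
  have := Real.rpow_le_rpow (Real.rpow_nonneg hP _) hgm (le_of_lt hm : (0:ℝ) ≤ s.card)
  rw [← Real.rpow_mul hP, inv_mul_cancel₀ hm.ne', Real.rpow_one, Real.rpow_natCast,
    mul_pow] at this
  calc (s.card : ℝ) ^ s.card * ∏ i ∈ s, x i
      ≤ (s.card : ℝ) ^ s.card * (((s.card:ℝ)⁻¹)^(s.card:ℕ) * (∑ i ∈ s, x i)^(s.card:ℕ)) := by
        apply mul_le_mul_of_nonneg_left this (by positivity)
    _ = (∑ i ∈ s, x i) ^ s.card := by
        rw [← mul_assoc, ← mul_pow, mul_inv_cancel₀ hm.ne', one_pow, one_mul]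

/-- Key step inequality: (m+1)^(m-1) * s1^(m-1) * (s1 + m²t) ≤ m^m (t+s1)^m for m ≥ 1. -/
lemma step_ineq (m : ℕ) (hm : 1 ≤ m) (t s1 : ℝ) (ht : 0 ≤ t) (hs1 : 0 ≤ s1) :
    ((m:ℝ)+1)^(m-1) * s1^(m-1) * (s1 + (m:ℝ)^2 * t) ≤ (m:ℝ)^m * (t+s1)^m := by
  have hm' : (1:ℝ) ≤ (m:ℝ) := by exact_mod_cast hm
  set S : ℝ := t + s1 with hS
  have hSnn : 0 ≤ S := by positivity
  set A : ℝ := ((m:ℝ)+1) * s1 with hA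
  set B : ℝ := (m:ℝ)^2 * S - ((m:ℝ)^2 - 1) * s1 with hB
  have hAnn : 0 ≤ A := by positivity
  have hLHS : ((m:ℝ)+1)^(m-1) * s1^(m-1) * (s1 + (m:ℝ)^2 * t) = A^(m-1) * B := by
    rw [hA, mul_pow, hB, hS]; ring
  have hRHS : (m:ℝ)^m * (t+s1)^m = ((m:ℝ)*S)^m := by rw [mul_pow, hS]
  rw [hLHS, hRHS]
  rcases le_or_gt B 0 with hB0 | hB0
  · calc A^(m-1) * B ≤ 0 := mul_nonpos_of_nonneg_of_nonpos (by positivity) hB0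
      _ ≤ ((m:ℝ)*S)^m := by positivity
  rcases eq_or_lt_of_le hSnn with hS0 | hS0
  · exfalso
    have ht0 : t = 0 := by nlinarith [hS0]
    have hs0 : s1 = 0 := by nlinarith [hS0]
    rw [hB, ← hS0, hs0] at hB0; simp at hB0
  -- main case : S > 0, B > 0
  set D : ℝ := (m:ℝ) * S with hD
  have hDpos : 0 < D := by positivity
  have hadiv : 0 ≤ A / D := by positivity
  have hbdiv : 0 ≤ B / D := by positivity
  have hw1 : (0:ℝ) ≤ ((m:ℝ)-1)/(m:ℝ) := by
    apply div_nonneg (by linarith) (by linarith)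
  have hw2 : (0:ℝ) ≤ 1/(m:ℝ) := by positivity
  have hwsum : ((m:ℝ)-1)/(m:ℝ) + 1/(m:ℝ) = 1 := by
    field_simp
    ring
  have hgm := Real.geom_mean_le_arith_mean2_weighted hw1 hw2 hadiv hbdiv hwsum
  have hsum1 : ((m:ℝ)-1)/(m:ℝ) * (A/D) + 1/(m:ℝ) * (B/D) = 1 := by
    rw [hA, hB, hD]
    have h1 : (m:ℝ) ≠ 0 := by linarith
    have h2 : S ≠ 0 := ne_of_gt hS0
    field_simp
    ring
  rw [hsum1] at hgm
  -- raise to power m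
  have hpow := Real.rpow_le_rpow (by positivity) hgm (by positivity : (0:ℝ) ≤ (m:ℝ))
  rw [Real.one_rpow] at hpow
  have hmne : (m:ℝ) ≠ 0 := by linarith
  have hexp : ((A/D) ^ (((m:ℝ)-1)/(m:ℝ)) * (B/D) ^ ((1:ℝ)/(m:ℝ))) ^ (m:ℝ)
      = (A/D)^(m-1) * (B/D) := by
    rw [Real.mul_rpow (Real.rpow_nonneg hadiv _) (Real.rpow_nonneg hbdiv _)]
    rw [← Real.rpow_mul hadiv, ← Real.rpow_mul hbdiv]
    rw [div_mul_cancel₀ _ hmne, div_mul_cancel₀ _ hmne, Real.rpow_one]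
    congr 1
    rw [show ((m:ℝ)-1) = ((m-1:ℕ):ℝ) by push_cast [Nat.cast_sub hm]; ring,
      Real.rpow_natCast]
  rw [hexp] at hpow
  -- multiply by D^m
  have hDm : A^(m-1) * B = ((A/D)^(m-1) * (B/D)) * D^m := by
    have : D^m = D^(m-1) * D := by
      rw [← pow_succ, Nat.sub_add_cancel hm]
    rw [this, div_pow]
    field_simp
  rw [hDm, hD, mul_pow]
  calc (A/D)^(m-1) * (B/D) * ((m:ℝ)^m * S^m) ≤ 1 * ((m:ℝ)^m * S^m) := by
        apply mul_le_mul_of_nonneg_right hpow (by positivity)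
    _ = (m:ℝ)^m * S^m := one_mul _

/-- Maclaurin-type: n^n * e_{n-1} ≤ n² * e₁^{n-1} for nonneg reals. -/
lemma key_maclaurin {ι : Type*} [DecidableEq ι] (s : Finset ι) (x : ι → ℝ) :
    (∀ i ∈ s, 0 ≤ x i) →
    (s.card : ℝ) ^ s.card * ∑ i ∈ s, ∏ j ∈ s.erase i, x j
      ≤ (s.card : ℝ) ^ 2 * (∑ i ∈ s, x i) ^ (s.card - 1) := by
  induction s using Finset.induction_on with
  | empty => intro _; simp
  | @insert a s' ha ih =>
    intro hx
    have hxa : 0 ≤ x a := hx a (Finset.mem_insert_self a s')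
    have hx' : ∀ i ∈ s', 0 ≤ x i := fun i hi => hx i (Finset.mem_insert_of_mem hi)
    set m := s'.card with hmdef
    have hcard : (insert a s').card = m + 1 := Finset.card_insert_of_notMem ha
    set s1 : ℝ := ∑ i ∈ s', x i with hs1def
    have hs1nn : 0 ≤ s1 := Finset.sum_nonneg hx'
    set P' : ℝ := ∏ j ∈ s', x j with hP'def
    set E' : ℝ := ∑ i ∈ s', ∏ j ∈ s'.erase i, x j with hE'def
    have hP'nn : 0 ≤ P' := Finset.prod_nonneg hx'
    have hE'nn : 0 ≤ E' := Finset.sum_nonneg fun i hi =>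
      Finset.prod_nonneg fun j hj => hx' j (Finset.mem_of_mem_erase hj)
    have hsum : ∑ i ∈ insert a s', ∏ j ∈ (insert a s').erase i, x j
        = P' + x a * E' := by
      rw [Finset.sum_insert ha, Finset.erase_insert ha]
      congr 1
      rw [Finset.mul_sum]
      apply Finset.sum_congr rfl
      intro i hi
      have hia : i ≠ a := fun h => ha (h ▸ hi)
      rw [Finset.erase_insert_of_ne hia.symm,
        Finset.prod_insert (fun h => ha (Finset.mem_of_mem_erase h))]
    have hsumx : ∑ i ∈ insert a s', x i = x a + s1 := Finset.sum_insert ha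
    rw [hsum, hsumx, hcard]
    rcases Nat.eq_zero_or_pos m with hm0 | hm
    · have hs'e : s' = ∅ := Finset.card_eq_zero.mp hm0
      simp only [hP'def, hE'def, hs1def, hs'e, hm0, Finset.prod_empty, Finset.sum_empty]
      norm_num
    -- m ≥ 1
    have hIH := ih hx'
    have hAM := amgm_prod s' x hx'
    rw [← hmdef, ← hs1def, ← hP'def] at hAM
    have hmm : (0:ℝ) < (m:ℝ)^m := by
      have : (0:ℝ) < (m:ℝ) := by exact_mod_cast hm
      positivity
    have hstep := step_ineq m hm (x a) s1 hxa hs1nn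
    have hcast : ((m + 1 : ℕ) : ℝ) = (m:ℝ) + 1 := by push_cast; ring
    rw [hcast]
    have hsub : m + 1 - 1 = m := by omega
    rw [hsub]
    rw [← mul_le_mul_iff_right₀ hmm]
    have e1 : m + 1 = (m-1) + 2 := by omega
    have e2 : m = (m-1) + 1 := by omega
    calc (m:ℝ)^m * (((m:ℝ)+1)^(m+1) * (P' + x a * E'))
        = ((m:ℝ)+1)^(m+1) * ((m:ℝ)^m * P' + x a * ((m:ℝ)^m * E')) := by ring
      _ ≤ ((m:ℝ)+1)^(m+1) * (s1^m + x a * ((m:ℝ)^2 * s1^(m-1))) := by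
          exact mul_le_mul_of_nonneg_left (add_le_add hAM (mul_le_mul_of_nonneg_left hIH hxa)) (pow_nonneg (add_nonneg (Nat.cast_nonneg _) zero_le_one) _)
      _ = ((m:ℝ)+1)^2 * (((m:ℝ)+1)^(m-1) * s1^(m-1) * (s1 + (m:ℝ)^2 * x a)) := by
          have hpw : ((m:ℝ)+1)^(m+1) = ((m:ℝ)+1)^(m-1) * ((m:ℝ)+1)^2 := by
            rw [← pow_add, ← e1]
          have hs1pow : s1^m = s1^(m-1) * s1 := by
            rw [← pow_succ, Nat.sub_add_cancel hm]
          rw [hpw, hs1pow]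
          ring
      _ ≤ ((m:ℝ)+1)^2 * ((m:ℝ)^m * (x a + s1)^m) := by
          apply mul_le_mul_of_nonneg_left hstep (pow_nonneg (add_nonneg (Nat.cast_nonneg _) zero_le_one) _)
      _ = (m:ℝ)^m * (((m:ℝ)+1)^2 * (x a + s1)^m) := by ring

/-- If Σᵢ log μᵢ = ψ then Σᵢ fᵢ(λ) ≥ n^{(n-2)/(n-1)} (Σᵢ λᵢ)^{1/(n-1)} e^{-ψ/(n-1)}. -/
theorem stmt18 (n : ℕ) (hn : 2 ≤ n) (lam : Fin n → ℝ) (ψ : ℝ)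
    (hμ : ∀ i : Fin n, 0 < ∑ j ∈ Finset.univ.erase i, lam j)
    (hψ : ∑ i : Fin n, Real.log (∑ j ∈ Finset.univ.erase i, lam j) = ψ) :
    ∑ i : Fin n, ∑ j ∈ Finset.univ.erase i, (∑ k ∈ Finset.univ.erase j, lam k)⁻¹
      ≥ (n : ℝ) ^ (((n : ℝ) - 2) / ((n : ℝ) - 1)) *
          (∑ i : Fin n, lam i) ^ ((1 : ℝ) / ((n : ℝ) - 1)) *
          Real.exp (-ψ / ((n : ℝ) - 1)) := by
  classical
  set μ : Fin n → ℝ := fun i => ∑ j ∈ Finset.univ.erase i, lam j with hμdef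
  have hμpos : ∀ i, 0 < μ i := hμ
  have hnR : (2:ℝ) ≤ (n:ℝ) := by exact_mod_cast hn
  have hn1 : (1:ℝ) ≤ (n:ℝ) - 1 := by linarith
  have hnpos : (0:ℝ) < (n:ℝ) := by linarith
  set T : ℝ := ∑ i : Fin n, (μ i)⁻¹ with hTdef
  have hTpos : 0 < T := Finset.sum_pos (fun i _ => inv_pos.mpr (hμpos i)) ⟨⟨0, by omega⟩, Finset.mem_univ _⟩
  have hcard : (Finset.univ : Finset (Fin n)).card = n := by simp
  -- LHS = (n-1) * T
  have hLHS : ∑ i : Fin n, ∑ j ∈ Finset.univ.erase i, (μ j)⁻¹ = ((n:ℝ) - 1) * T := by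
    have : ∀ i : Fin n, ∑ j ∈ Finset.univ.erase i, (μ j)⁻¹ = T - (μ i)⁻¹ := fun i =>
      Finset.sum_erase_eq_sub (Finset.mem_univ i)
    rw [Finset.sum_congr rfl (fun i _ => this i), Finset.sum_sub_distrib,
      Finset.sum_const, hcard, ← hTdef, nsmul_eq_mul]
    ring
  -- Σ μ = (n-1) Σ λ
  have hμsum : ∑ i : Fin n, μ i = ((n:ℝ) - 1) * ∑ i : Fin n, lam i := by
    have : ∀ i : Fin n, μ i = (∑ j : Fin n, lam j) - lam i := fun i =>
      Finset.sum_erase_eq_sub (Finset.mem_univ i)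
    rw [Finset.sum_congr rfl (fun i _ => this i), Finset.sum_sub_distrib,
      Finset.sum_const, hcard, nsmul_eq_mul]
    ring
  have hSlam : 0 < ∑ i : Fin n, lam i := by
    have h1 : 0 < ∑ i : Fin n, μ i :=
      Finset.sum_pos (fun i _ => hμpos i) ⟨⟨0, by omega⟩, Finset.mem_univ _⟩
    nlinarith
  -- ∏ μ = exp ψ
  have hprod : ∏ i : Fin n, μ i = Real.exp ψ := by
    rw [← hψ, Real.exp_sum]
    exact Finset.prod_congr rfl fun i _ => (Real.exp_log (hμpos i)).symm
  have hprodinv : ∏ i : Fin n, (μ i)⁻¹ = Real.exp (-ψ) := by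
    rw [Finset.prod_inv_distrib, hprod, Real.exp_neg]
  -- E = exp(-ψ) * (n-1) * Σλ
  have hE : ∑ i : Fin n, ∏ j ∈ Finset.univ.erase i, (μ j)⁻¹
      = Real.exp (-ψ) * (((n:ℝ) - 1) * ∑ i : Fin n, lam i) := by
    have h1 : ∀ i : Fin n, ∏ j ∈ Finset.univ.erase i, (μ j)⁻¹
        = (∏ j : Fin n, (μ j)⁻¹) * μ i := by
      intro i
      rw [← Finset.prod_erase_mul Finset.univ (fun j => (μ j)⁻¹) (Finset.mem_univ i),
        mul_assoc, inv_mul_cancel₀ (ne_of_gt (hμpos i)), mul_one]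
    rw [Finset.sum_congr rfl (fun i _ => h1 i), ← Finset.mul_sum, hprodinv, hμsum]
  -- Maclaurin
  have hkey := key_maclaurin (Finset.univ : Finset (Fin n)) (fun i => (μ i)⁻¹)
    (fun i _ => le_of_lt (inv_pos.mpr (hμpos i)))
  rw [hcard, hE, ← hTdef] at hkey
  -- T^(n-1) ≥ n^(n-2) * (n-1) * Σλ * exp(-ψ)
  have hn2pos : (0:ℝ) < (n:ℝ)^2 := by positivity
  have hpowsplit : (n:ℝ)^n = (n:ℝ)^2 * (n:ℝ)^(n-2) := by
    rw [← pow_add]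
    congr 1
    omega
  have hTn : (n:ℝ)^(n-2) * (Real.exp (-ψ) * (((n:ℝ) - 1) * ∑ i : Fin n, lam i)) ≤ T^(n-1) := by
    rw [hpowsplit, mul_assoc] at hkey
    exact le_of_mul_le_mul_left hkey hn2pos
  set R : ℝ := (n:ℝ)^(n-2) * (∑ i : Fin n, lam i) * Real.exp (-ψ) with hRdef
  have hRpos : 0 < R := by positivity
  have hRT : R ≤ T^(n-1) := by
    refine le_trans ?_ hTn
    rw [hRdef]
    nlinarith [Real.exp_pos (-ψ), pow_pos hnpos (n-2), hSlam]
  -- RHS = R ^ (1/(n-1))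
  have hne : (n:ℝ) - 1 ≠ 0 := by linarith
  have hcast2 : ((n - 2 : ℕ) : ℝ) = (n:ℝ) - 2 := by
    push_cast [Nat.cast_sub hn]; ring
  have hRHS : (n : ℝ) ^ (((n : ℝ) - 2) / ((n : ℝ) - 1)) *
      (∑ i : Fin n, lam i) ^ ((1 : ℝ) / ((n : ℝ) - 1)) *
      Real.exp (-ψ / ((n : ℝ) - 1)) = R ^ ((1:ℝ) / ((n:ℝ) - 1)) := by
    have e1 : (n : ℝ) ^ (((n : ℝ) - 2) / ((n : ℝ) - 1))
        = ((n:ℝ)^(n-2 : ℕ)) ^ ((1:ℝ) / ((n:ℝ) - 1)) := by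
      rw [← Real.rpow_natCast (n:ℝ) (n-2), ← Real.rpow_mul (le_of_lt hnpos), hcast2]
      congr 1
      field_simp
    have e2 : Real.exp (-ψ / ((n : ℝ) - 1)) = (Real.exp (-ψ)) ^ ((1:ℝ) / ((n:ℝ) - 1)) := by
      rw [Real.rpow_def_of_pos (Real.exp_pos _), Real.log_exp]
      congr 1
      field_simp
    rw [e1, e2, hRdef, Real.mul_rpow (by positivity) (by positivity),
      Real.mul_rpow (by positivity) (by positivity)]
  rw [hμdef] at hLHS
  rw [ge_iff_le, hRHS, hLHS]
  -- conclude
  have hfinal : R ^ ((1:ℝ) / ((n:ℝ) - 1)) ≤ T := by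
    have h1 : R ^ ((1:ℝ) / ((n:ℝ) - 1)) ≤ (T^(n-1 : ℕ)) ^ ((1:ℝ) / ((n:ℝ) - 1)) :=
      Real.rpow_le_rpow (le_of_lt hRpos) hRT (by positivity)
    have hcast3 : ((n - 1 : ℕ) : ℝ) = (n:ℝ) - 1 := by
      push_cast [Nat.cast_sub (by omega : 1 ≤ n)]; ring
    have h2 : (T^(n-1 : ℕ)) ^ ((1:ℝ) / ((n:ℝ) - 1)) = T := by
      rw [← Real.rpow_natCast T (n-1), ← Real.rpow_mul (le_of_lt hTpos), hcast3,
        mul_one_div, div_self hne, Real.rpow_one]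
    rw [h2] at h1
    exact h1
  calc R ^ ((1:ℝ) / ((n:ℝ) - 1)) ≤ T := hfinal
    _ ≤ ((n:ℝ) - 1) * T := by nlinarith
end
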